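/- arXiv:math/0608317 — 5 statements merged into one kernel-verified Lean document; each statement's English description precedes it below -/
import Mathlib

section
/- Suppose F is analytic in a neighborhood of z = 1 and satisfies F(z²) = F(z)²/(a(F(z)−1)) near z = 1, with a ∉ {0,1}. If F(1) = 0 then F is identically zero in a neighborhood of 1. -/
open Complex Metric Topology Filter

/-- If `F` is analytic near `z = 1` and satisfies `a(F(z)−1)F(z²) = F(z)²` near `1`
(with `a ∉ {0,1}`), and `F(1) = 0`, then `F` vanishes identically near `1`. -/
theorem stmt5 (a : ℂ) (ha0 : a ≠ 0) (ha1 : a ≠ 1) (F : ℂ → ℂ) (r : ℝ) (hr : 0 < r)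
    (hF : AnalyticOnNhd ℂ F (ball (1 : ℂ) r))
    (heq : ∀ z ∈ ball (1 : ℂ) r, z ^ 2 ∈ ball (1 : ℂ) r →
      a * (F z - 1) * F (z ^ 2) = F z ^ 2)
    (h1 : F 1 = 0) :
    ∃ ε > 0, ∀ z ∈ ball (1 : ℂ) ε, F z = 0 := by
  have hA : AnalyticAt ℂ F 1 := hF 1 (mem_ball_self hr)
  by_cases htop : analyticOrderAt F 1 = ⊤
  · have hev : ∀ᶠ z in 𝓝 (1 : ℂ), F z = 0 := analyticOrderAt_eq_top.mp htop
    rw [Metric.eventually_nhds_iff] at hev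
    obtain ⟨ε, hε, hball⟩ := hev
    exact ⟨ε, hε, fun z hz => hball (mem_ball.mp hz)⟩
  · exfalso
    obtain ⟨n, hn⟩ := WithTop.ne_top_iff_exists.mp htop
    obtain ⟨g, hg, hg1, hfg⟩ := (hA.analyticOrderAt_eq_natCast (n := n)).mp hn.symm
    -- n ≠ 0 since F 1 = 0
    have hn0 : n ≠ 0 := by
      intro h0
      apply hg1
      have := hfg.self_of_nhds
      simpa [h0, h1] using this.symm
    have hsq : Filter.Tendsto (fun z : ℂ => z ^ 2) (𝓝 1) (𝓝 1) := by
      simpa using (continuous_pow 2).tendsto (1 : ℂ)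
    have hball : ∀ᶠ z in 𝓝 (1 : ℂ), z ∈ ball (1 : ℂ) r :=
      isOpen_ball.eventually_mem (mem_ball_self hr)
    have hball2 : ∀ᶠ z in 𝓝 (1 : ℂ), z ^ 2 ∈ ball (1 : ℂ) r := hsq.eventually hball
    have hfg2 : ∀ᶠ z in 𝓝 (1 : ℂ), F (z ^ 2) = (z ^ 2 - 1) ^ n • g (z ^ 2) :=
      hsq.eventually hfg
    have hAR : AnalyticAt ℂ (fun z => F z ^ 2) 1 := hA.pow 2
    -- order of F^2 is 2n
    have hord2 : analyticOrderAt (fun z => F z ^ 2) 1 = (2 * n : ℕ) := by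
      rw [hAR.analyticOrderAt_eq_natCast]
      refine ⟨fun z => g z ^ 2, hg.pow 2, pow_ne_zero 2 hg1, ?_⟩
      filter_upwards [hfg] with z hz
      rw [hz]
      simp only [smul_eq_mul]
      rw [mul_pow, ← pow_mul, mul_comm n 2]
    -- order of F^2 is n, via the functional equation
    have hgsq : AnalyticAt ℂ (fun z : ℂ => g (z ^ 2)) 1 := by
      have hg' : AnalyticAt ℂ g ((1 : ℂ) ^ 2) := by simpa using hg
      have hf2 : AnalyticAt ℂ (fun z : ℂ => z ^ 2) 1 :=
        (analyticAt_id : AnalyticAt ℂ id (1 : ℂ)).pow 2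
      exact AnalyticAt.comp (g := g) (f := fun z : ℂ => z ^ 2) (x := (1 : ℂ)) hg' hf2
    have hhA : AnalyticAt ℂ
        (fun z : ℂ => a * (F z - 1) * ((z + 1) ^ n * g (z ^ 2))) 1 :=
      (analyticAt_const.mul (hA.sub analyticAt_const)).mul
        ((((analyticAt_id : AnalyticAt ℂ id (1 : ℂ)).add analyticAt_const).pow n).mul hgsq)
    have hord1 : analyticOrderAt (fun z => F z ^ 2) 1 = (n : ℕ) := by
      rw [hAR.analyticOrderAt_eq_natCast]
      refine ⟨fun z => a * (F z - 1) * ((z + 1) ^ n * g (z ^ 2)), hhA, ?_, ?_⟩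
      · simp only [h1]
        have h2 : ((1 : ℂ) + 1) ^ n ≠ 0 := pow_ne_zero n (by norm_num)
        have hg1' : g ((1 : ℂ) ^ 2) ≠ 0 := by simpa using hg1
        have : (0 : ℂ) - 1 ≠ 0 := by norm_num
        exact mul_ne_zero (mul_ne_zero ha0 this) (mul_ne_zero h2 hg1')
      · filter_upwards [hball, hball2, hfg2] with z hz hz2 hz3
        have hEq := heq z hz hz2
        rw [← hEq, hz3]
        simp only [smul_eq_mul]
        have hfac : z ^ 2 - 1 = (z - 1) * (z + 1) := by ring
        rw [hfac, mul_pow]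
        ring
    rw [hord1] at hord2
    have : n = 2 * n := by exact_mod_cast hord2
    omega
end

section
/- Suppose F is meromorphic at z = 1 with a pole of order p ≥ 1 and satisfies F(z²) = F(z)²/(a(F(z)−1)) near z = 1 (a ≠ 0). Then a = 2^p. In particular, if additionally |a| < 5, then a ∈ {2, 4}. -/
open Complex Filter

/-- If `F` is meromorphic at `z = 1` with a pole of order `p ≥ 1` (so `F(z) = g(z)/(z−1)^p`
with `g` analytic, `g(1) ≠ 0`) and satisfies `a(F(z)−1)F(z²) = F(z)²` near `1` (`a ≠ 0`),
then `a = 2^p`; in particular if `|a| < 5` then `a ∈ {2,4}`. -/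
theorem stmt7 (a : ℂ) (ha : a ≠ 0) (p : ℕ) (hp : 1 ≤ p) (F g : ℂ → ℂ)
    (hg : AnalyticAt ℂ g 1) (hg1 : g 1 ≠ 0)
    (hpole : ∀ᶠ z in nhdsWithin (1 : ℂ) {(1 : ℂ)}ᶜ, F z = g z / (z - 1) ^ p)
    (heq : ∀ᶠ z in nhdsWithin (1 : ℂ) {(1 : ℂ)}ᶜ,
      a * (F z - 1) * F (z ^ 2) = F z ^ 2) :
    a = 2 ^ p ∧ (‖a‖ < 5 → a = 2 ∨ a = 4) := by
  have hgc : ContinuousAt g 1 := hg.continuousAt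
  -- eventually in punctured nhds: z ≠ 1 and z ≠ -1
  have hball : ∀ᶠ z in nhdsWithin (1 : ℂ) {(1 : ℂ)}ᶜ, z ∈ Metric.ball (1 : ℂ) 1 :=
    eventually_nhdsWithin_of_eventually_nhds (Metric.ball_mem_nhds 1 one_pos)
  have hne1 : ∀ᶠ z in nhdsWithin (1 : ℂ) {(1 : ℂ)}ᶜ, z ≠ 1 :=
    eventually_mem_nhdsWithin
  have hnem1 : ∀ᶠ z in nhdsWithin (1 : ℂ) {(1 : ℂ)}ᶜ, z ≠ -1 := by
    filter_upwards [hball] with z hz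
    intro h
    rw [h] at hz
    simp only [Metric.mem_ball] at hz
    have : dist (-1 : ℂ) 1 = 2 := by
      simp [Complex.dist_eq]
      norm_num
    linarith [this ▸ hz]
  have hsqne : ∀ᶠ z in nhdsWithin (1 : ℂ) {(1 : ℂ)}ᶜ, z ^ 2 ≠ 1 := by
    filter_upwards [hne1, hnem1] with z h1 h2
    intro h
    have : (z - 1) * (z + 1) = 0 := by linear_combination h
    rcases mul_eq_zero.1 this with h' | h'
    · exact h1 (by linear_combination h')
    · exact h2 (by linear_combination h')
  have hsq : Tendsto (fun z : ℂ => z ^ 2) (nhdsWithin 1 {(1 : ℂ)}ᶜ)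
      (nhdsWithin 1 {(1 : ℂ)}ᶜ) := by
    apply tendsto_nhdsWithin_of_tendsto_nhds_of_eventually_within
    · have : Tendsto (fun z : ℂ => z ^ 2) (nhds 1) (nhds (1 ^ 2)) :=
        (continuous_pow 2).tendsto 1
      simpa using this.mono_left nhdsWithin_le_nhds
    · exact hsqne
  have hpole2 : ∀ᶠ z in nhdsWithin (1 : ℂ) {(1 : ℂ)}ᶜ,
      F (z ^ 2) = g (z ^ 2) / (z ^ 2 - 1) ^ p := hsq.eventually hpole
  -- key cleared equation
  have hE : ∀ᶠ z in nhdsWithin (1 : ℂ) {(1 : ℂ)}ᶜ,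
      a * (g z - (z - 1) ^ p) * g (z ^ 2) = g z ^ 2 * (z + 1) ^ p := by
    filter_upwards [heq, hpole, hpole2, hne1, hnem1] with z he hF hF2 h1 h2
    have hz1 : z - 1 ≠ 0 := sub_ne_zero.2 h1
    have hz2 : z + 1 ≠ 0 := by
      intro h; exact h2 (by linear_combination h)
    have h3 : z ^ 2 - 1 = (z - 1) * (z + 1) := by ring
    rw [hF, hF2, h3, mul_pow] at he
    field_simp at he
    have hnz : ((z - 1) ^ p) ^ 2 ≠ 0 := pow_ne_zero _ (pow_ne_zero _ hz1)
    apply mul_right_cancel₀ hnz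
    linear_combination ((z - 1) ^ p) ^ 2 * he
  -- take limits
  have hL : Tendsto (fun z : ℂ => a * (g z - (z - 1) ^ p) * g (z ^ 2))
      (nhdsWithin 1 {(1 : ℂ)}ᶜ) (nhds (a * g 1 * g 1)) := by
    have : ContinuousAt (fun z : ℂ => a * (g z - (z - 1) ^ p) * g (z ^ 2)) 1 := by
      apply ContinuousAt.mul
      · exact continuousAt_const.mul (hgc.sub ((continuousAt_id.sub continuousAt_const).pow p))
      · have hsqc : ContinuousAt (fun z : ℂ => z ^ 2) 1 := (continuous_pow 2).continuousAt
        show ContinuousAt (g ∘ fun z : ℂ => z ^ 2) 1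
        exact ContinuousAt.comp (by simpa using hgc) hsqc
    have h := this.tendsto.mono_left (nhdsWithin_le_nhds (s := {(1 : ℂ)}ᶜ))
    simp only [sub_self, one_pow] at h
    have hz : (0:ℂ) ^ p = 0 := zero_pow (by omega)
    simpa [hz, sub_self] using h
  have hR : Tendsto (fun z : ℂ => g z ^ 2 * (z + 1) ^ p)
      (nhdsWithin 1 {(1 : ℂ)}ᶜ) (nhds (g 1 ^ 2 * 2 ^ p)) := by
    have : ContinuousAt (fun z : ℂ => g z ^ 2 * (z + 1) ^ p) 1 :=
      (hgc.pow 2).mul ((continuousAt_id.add continuousAt_const).pow p)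
    have h := this.tendsto.mono_left (nhdsWithin_le_nhds (s := {(1 : ℂ)}ᶜ))
    norm_num at h
    exact h
  have hL' : Tendsto (fun z : ℂ => a * (g z - (z - 1) ^ p) * g (z ^ 2))
      (nhdsWithin 1 {(1 : ℂ)}ᶜ) (nhds (g 1 ^ 2 * 2 ^ p)) := hR.congr' (hE.mono fun _ h => h.symm)
  have key : a * g 1 * g 1 = g 1 ^ 2 * 2 ^ p := tendsto_nhds_unique hL hL'
  have ha2 : a = 2 ^ p := by
    have hg2 : g 1 * g 1 ≠ 0 := mul_ne_zero hg1 hg1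
    have h0 : (a - 2 ^ p) * (g 1 * g 1) = 0 := by linear_combination key
    rcases mul_eq_zero.1 h0 with h | h
    · exact sub_eq_zero.1 h
    · exact absurd h hg2
  refine ⟨ha2, fun habs => ?_⟩
  have hps : (2 : ℝ) ^ p < 5 := by
    have : ‖(2 : ℂ) ^ p‖ = 2 ^ p := by
      rw [norm_pow]; norm_num
    rw [ha2, this] at habs
    exact habs
  have hp2 : p ≤ 2 := by
    by_contra h
    push_neg at h
    have : (2 : ℝ) ^ 3 ≤ 2 ^ p := pow_le_pow_right₀ (by norm_num) h
    norm_num at this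
    linarith
  interval_cases p
  · left; rw [ha2]; norm_num
  · right; rw [ha2]; norm_num
end

section
/- There exists a unique formal power series F(z) = Σ_{k≥1} b_k z^k with b₁ = −a (a ≠ 0) satisfying the functional equation a(F(z)−1)F(z²) = F(z)² as formal power series. -/
open PowerSeries

/-- `F(z²)` for a formal power series `F`: the series whose `2k`-th coefficient is the
`k`-th coefficient of `F`, and whose odd coefficients vanish. -/
noncomputable def squareSubst (F : PowerSeries ℂ) : PowerSeries ℂ :=
  PowerSeries.mk fun n => if 2 ∣ n then PowerSeries.coeff (n / 2) F else 0

namespace Stmt9Aux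

open Finset

noncomputable def S1 (f : ℕ → ℂ) (n : ℕ) : ℂ := ∑ t ∈ Icc 1 (n/2), f (n - 2*t) * f t
noncomputable def Iv (f : ℕ → ℂ) (n : ℕ) : ℂ := if 2 ∣ n then f (n/2) else 0

noncomputable def bb (a : ℂ) : ℕ → ℂ
  | 0 => 0
  | 1 => -a
  | (m+2) =>
    (2*a)⁻¹ * ((∑ i ∈ (Icc 2 (m+1)).attach, bb a i.1 * bb a (m+3-i.1))
      + a * (if 2 ∣ (m+3) then bb a ((m+3)/2) else 0)
      - a * ∑ t ∈ (Icc 1 ((m+3)/2)).attach, bb a (m+3-2*t.1) * bb a t.1)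
  decreasing_by
  · obtain ⟨h1, h2⟩ := Finset.mem_Icc.mp i.2; omega
  · obtain ⟨h1, h2⟩ := Finset.mem_Icc.mp i.2; omega
  · omega
  · obtain ⟨h1, h2⟩ := Finset.mem_Icc.mp t.2; omega
  · obtain ⟨h1, h2⟩ := Finset.mem_Icc.mp t.2; omega

lemma bb_succ (a : ℂ) (m : ℕ) :
    bb a (m+2) = (2*a)⁻¹ * ((∑ i ∈ Icc 2 (m+1), bb a i * bb a (m+3-i))
      + a * Iv (bb a) (m+3) - a * S1 (bb a) (m+3)) := by
  rw [bb, Iv, S1]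
  rw [Finset.sum_attach (Icc 2 (m+1)) (fun i => bb a i * bb a (m+3-i))]
  rw [Finset.sum_attach (Icc 1 ((m+3)/2)) (fun t => bb a (m+3-2*t) * bb a t)]

lemma sumFG (f : ℕ → ℂ) (h0 : f 0 = 0) (n : ℕ) :
    ∑ p ∈ antidiagonal n, f p.1 * Iv f p.2 = S1 f n := by
  rw [← Finset.Nat.sum_antidiagonal_swap]
  rw [show (fun p : ℕ × ℕ => f p.swap.1 * Iv f p.swap.2) = fun p : ℕ × ℕ => f p.2 * Iv f p.1 from rfl]
  rw [Finset.Nat.sum_antidiagonal_eq_sum_range_succ (fun i j => f j * Iv f i)]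
  have h1 : ∑ k ∈ range (n+1), f (n-k) * Iv f k
      = ∑ k ∈ (range (n+1)).filter (2 ∣ ·), f (n-k) * Iv f k := by
    rw [Finset.sum_filter_of_ne]
    intro x _ hx
    by_contra hd
    exact hx (by simp [Iv, hd])
  rw [h1]
  have h2 : ∑ k ∈ (range (n+1)).filter (2 ∣ ·), f (n-k) * Iv f k
      = ∑ t ∈ Icc 0 (n/2), f (n - 2*t) * f t := by
    refine Finset.sum_nbij' (fun k => k / 2) (fun t => 2 * t) ?_ ?_ ?_ ?_ ?_
    · intro k hk; simp only [mem_filter, mem_range] at hk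
      simp only [mem_Icc]; omega
    · intro t ht; simp only [mem_Icc] at ht
      simp only [mem_filter, mem_range]; omega
    · intro k hk; simp only [mem_filter, mem_range] at hk; omega
    · intro t _; omega
    · intro k hk; simp only [mem_filter, mem_range] at hk
      obtain ⟨hk1, hk2⟩ := hk
      have : Iv f k = f (k / 2) := by simp [Iv, hk2]
      rw [this]
      congr 2
      omega
  rw [h2, S1]
  have h3 : Icc 0 (n/2) = insert 0 (Icc 1 (n/2)) := by ext x; simp [mem_Icc, mem_insert]; omega
  rw [h3, Finset.sum_insert (by simp)]
  simp [h0]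

lemma sumFF (f : ℕ → ℂ) (h0 : f 0 = 0) (n : ℕ) (hn : 3 ≤ n) :
    ∑ p ∈ antidiagonal n, f p.1 * f p.2
      = 2 * f 1 * f (n-1) + ∑ i ∈ Icc 2 (n-2), f i * f (n-i) := by
  rw [Finset.Nat.sum_antidiagonal_eq_sum_range_succ (fun i j => f i * f j)]
  have hsub : ∑ k ∈ range (n+1), f k * f (n-k) = ∑ k ∈ Icc 1 (n-1), f k * f (n-k) := by
    refine (Finset.sum_subset ?_ ?_).symm
    · intro x hx; simp only [mem_Icc] at hx; simp only [mem_range]; omega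
    · intro x hx hx'
      simp only [mem_range] at hx; simp only [mem_Icc, not_and, not_le] at hx'
      rcases Nat.eq_zero_or_pos x with h | h
      · subst h; simp [h0]
      · have : x = n := by omega
        subst this; simp [h0]
  rw [hsub]
  have hset : Icc 1 (n-1) = insert 1 (insert (n-1) (Icc 2 (n-2))) := by
    ext x; simp only [mem_Icc, mem_insert]; omega
  rw [hset, Finset.sum_insert, Finset.sum_insert]
  · have e1 : n - (n-1) = 1 := by omega
    rw [e1]; ring
  · simp only [mem_Icc]; omega
  · simp only [mem_insert, mem_Icc]; omega

lemma coeffLHS (a : ℂ) (F : PowerSeries ℂ) (h0 : constantCoeff F = 0) (n : ℕ) :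
    coeff n (PowerSeries.C a * (F - 1) * squareSubst F)
      = a * S1 (fun k => coeff k F) n - a * Iv (fun k => coeff k F) n := by
  set f : ℕ → ℂ := fun k => coeff k F with hf
  have hf0 : f 0 = 0 := by
    simp only [hf]; rw [PowerSeries.coeff_zero_eq_constantCoeff]; exact h0
  have hG : ∀ k, coeff k (squareSubst F) = Iv f k := by
    intro k; simp [squareSubst, Iv, coeff_mk, hf]
  rw [mul_assoc, coeff_C_mul, coeff_mul]
  have : ∑ p ∈ antidiagonal n, coeff p.1 (F - 1) * coeff p.2 (squareSubst F)
      = ∑ p ∈ antidiagonal n, (f p.1 * Iv f p.2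
          - (if p.1 = 0 then 1 else 0) * Iv f p.2) := by
    refine Finset.sum_congr rfl fun p _ => ?_
    rw [map_sub, coeff_one, hG]
    ring
  rw [this, Finset.sum_sub_distrib, sumFG f hf0 n]
  have h2 : ∑ p ∈ antidiagonal n, (if p.1 = 0 then 1 else 0) * Iv f p.2 = Iv f n := by
    rw [Finset.Nat.sum_antidiagonal_eq_sum_range_succ (fun i j => (if i = 0 then 1 else 0) * Iv f j)]
    rw [Finset.sum_eq_single 0]
    · simp
    · intro b _ hb; simp [hb]
    · intro h; simp at h
  rw [h2]
  ring

lemma eq_iff (a : ℂ) (F : PowerSeries ℂ) (h0 : constantCoeff F = 0) :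
    (PowerSeries.C a * (F - 1) * squareSubst F = F ^ 2)
      ↔ ∀ n, a * S1 (fun k => coeff k F) n - a * Iv (fun k => coeff k F) n
          = ∑ p ∈ antidiagonal n, coeff p.1 F * coeff p.2 F := by
  rw [PowerSeries.ext_iff]
  refine forall_congr' fun n => ?_
  rw [coeffLHS a F h0 n, sq, coeff_mul]

lemma solve (a : ℂ) (ha : a ≠ 0) (f : ℕ → ℂ) (h0 : f 0 = 0) (h1 : f 1 = -a) (m : ℕ) :
    (a * S1 f (m+3) - a * Iv f (m+3) = ∑ p ∈ antidiagonal (m+3), f p.1 * f p.2)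
      ↔ f (m+2) = (2*a)⁻¹ * ((∑ i ∈ Icc 2 (m+1), f i * f (m+3-i))
          + a * Iv f (m+3) - a * S1 f (m+3)) := by
  rw [sumFF f h0 (m+3) (by omega)]
  have e1 : m+3-1 = m+2 := by omega
  have e2 : m+3-2 = m+1 := by omega
  rw [e1, e2, h1]
  have h2a : (2*a) ≠ 0 := by
    simp [ha]
  constructor
  · intro h
    field_simp
    linear_combination h
  · intro h
    rw [h]
    field_simp
    ring

end Stmt9Aux

open Stmt9Aux Finset

/-- There exists a unique formal power series `F` with `F(0) = 0`, coefficient of `z`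
equal to `−a` (`a ≠ 0`), satisfying `a(F(z)−1)F(z²) = F(z)²` as formal power series. -/
theorem stmt9 (a : ℂ) (ha : a ≠ 0) :
    ∃! F : PowerSeries ℂ,
      PowerSeries.constantCoeff F = 0 ∧ PowerSeries.coeff 1 F = -a ∧
        PowerSeries.C a * (F - 1) * squareSubst F = F ^ 2 := by
  have hb0 : bb a 0 = 0 := by rw [bb]
  have hb1 : bb a 1 = -a := by rw [bb]
  refine ⟨PowerSeries.mk (bb a), ⟨?_, ?_, ?_⟩, ?_⟩
  · rw [← PowerSeries.coeff_zero_eq_constantCoeff, coeff_mk, hb0]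
  · rw [coeff_mk, hb1]
  · have h0 : constantCoeff (PowerSeries.mk (bb a)) = 0 := by
      rw [← PowerSeries.coeff_zero_eq_constantCoeff, coeff_mk, hb0]
    rw [eq_iff a _ h0]
    have hfb : (fun k => coeff k (PowerSeries.mk (bb a))) = bb a := funext fun k => coeff_mk k _
    simp only [hfb, coeff_mk]
    intro n
    match n with
    | 0 =>
      simp [S1, Iv, Finset.Nat.sum_antidiagonal_eq_sum_range_succ (fun i j => bb a i * bb a j),
        Finset.sum_range_succ, hb0]
    | 1 =>
      simp [S1, Iv, Finset.Nat.sum_antidiagonal_eq_sum_range_succ (fun i j => bb a i * bb a j),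
        Finset.sum_range_succ, hb0, Nat.odd_iff]
    | 2 =>
      simp [S1, Iv, Finset.Nat.sum_antidiagonal_eq_sum_range_succ (fun i j => bb a i * bb a j),
        Finset.sum_range_succ, hb0, hb1]
    | (m+3) =>
      exact (solve a ha (bb a) hb0 hb1 m).mpr (bb_succ a m)
  · rintro F ⟨h0, h1, heq⟩
    have key : ∀ n, coeff n F = bb a n := by
      intro n
      induction n using Nat.strong_induction_on with
      | _ n ih =>
        match n with
        | 0 => rw [PowerSeries.coeff_zero_eq_constantCoeff, h0, hb0]
        | 1 => rw [h1, hb1]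
        | (m+2) =>
          set f : ℕ → ℂ := fun k => coeff k F with hf
          have hf0 : f 0 = 0 := by
            simp only [hf]; rw [PowerSeries.coeff_zero_eq_constantCoeff]; exact h0
          have hf1 : f 1 = -a := h1
          have hsol := (solve a ha f hf0 hf1 m).mp ((eq_iff a F h0).mp heq (m+3))
          have hSum : ∑ i ∈ Icc 2 (m+1), f i * f (m+3-i)
              = ∑ i ∈ Icc 2 (m+1), bb a i * bb a (m+3-i) := by
            refine Finset.sum_congr rfl fun i hi => ?_
            simp only [mem_Icc] at hi
            simp only [hf]
            rw [ih i (by omega), ih (m+3-i) (by omega)]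
          have hS1 : S1 f (m+3) = S1 (bb a) (m+3) := by
            refine Finset.sum_congr rfl fun t ht => ?_
            simp only [mem_Icc] at ht
            have ht2 : t ≤ m+1 := by omega
            simp only [hf]
            rw [ih t (by omega), ih (m+3-2*t) (by omega)]
          have hIv : Iv f (m+3) = Iv (bb a) (m+3) := by
            unfold Iv
            split
            · simp only [hf]; rw [ih ((m+3)/2) (by omega)]
            · rfl
          rw [show coeff (m+2) F = f (m+2) from rfl, hsol, hSum, hS1, hIv, ← bb_succ a m]
    exact PowerSeries.ext fun n => by rw [key n, coeff_mk]
end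

section
/- Suppose F is analytic on a disk {|z| < r} with r ≤ 1, F(0) = 0, F′(0) = −a with a ≠ 0, and F satisfies a(F(z)−1)F(z²) = F(z)² on its domain. Then F(z) ≠ 0 for all z ≠ 0 in the disk. -/
open Complex Metric

/-- If `F` is analytic on `{|z| < r}` with `r ≤ 1`, `F(0) = 0`, `F′(0) = −a ≠ 0`, and
`a(F(z)−1)F(z²) = F(z)²` on the disk, then `F(z) ≠ 0` for all `z ≠ 0` in the disk. -/
theorem stmt13 (a : ℂ) (ha : a ≠ 0) (r : ℝ) (hr0 : 0 < r) (hr1 : r ≤ 1) (F : ℂ → ℂ)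
    (hF : AnalyticOnNhd ℂ F (ball (0 : ℂ) r))
    (h0 : F 0 = 0) (h0' : deriv F 0 = -a)
    (heq : ∀ z ∈ ball (0 : ℂ) r, z ^ 2 ∈ ball (0 : ℂ) r →
      a * (F z - 1) * F (z ^ 2) = F z ^ 2) :
    ∀ z ∈ ball (0 : ℂ) r, z ≠ 0 → F z ≠ 0 := by
  rintro z hz hz0 hFz
  have hzr : ‖z‖ < r := by simpa [mem_ball, dist_eq_norm] using hz
  have hz1 : ‖z‖ < 1 := lt_of_lt_of_le hzr hr1
  have hzpos : 0 < ‖z‖ := norm_pos_iff.mpr hz0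
  -- all iterated squares are in the ball and F vanishes there
  have hmem : ∀ n : ℕ, z ^ (2 ^ n) ∈ ball (0 : ℂ) r := by
    intro n
    have : ‖z ^ (2 ^ n)‖ ≤ ‖z‖ := by
      rw [norm_pow]
      calc ‖z‖ ^ 2 ^ n ≤ ‖z‖ ^ 1 :=
            pow_le_pow_of_le_one (norm_nonneg z) hz1.le (Nat.one_le_two_pow)
        _ = ‖z‖ := pow_one _
    simpa [mem_ball, dist_eq_norm] using lt_of_le_of_lt this hzr
  have hzero : ∀ n : ℕ, F (z ^ (2 ^ n)) = 0 := by
    intro n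
    induction n with
    | zero => simpa using hFz
    | succ n ih =>
      have h1 := heq (z ^ (2 ^ n)) (hmem n) (by
        have : (z ^ (2 ^ n)) ^ 2 = z ^ (2 ^ (n + 1)) := by
          rw [← pow_mul, pow_succ]
        rw [this]; exact hmem (n + 1))
      rw [ih] at h1
      have : a * (0 - 1) * F ((z ^ 2 ^ n) ^ 2) = 0 := by simpa using h1
      have h2 : F ((z ^ 2 ^ n) ^ 2) = 0 := by
        rcases mul_eq_zero.mp this with h | h
        · exact absurd h (by simpa using ha)
        · exact h
      have he : (z ^ (2 ^ n)) ^ 2 = z ^ (2 ^ (n + 1)) := by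
        rw [← pow_mul, pow_succ]
      rwa [he] at h2
  -- the sequence tends to 0
  have htend : Filter.Tendsto (fun n : ℕ => z ^ (2 ^ n)) Filter.atTop (nhds 0) := by
    rw [tendsto_zero_iff_norm_tendsto_zero]
    simp only [norm_pow]
    have h1 : Filter.Tendsto (fun m : ℕ => ‖z‖ ^ m) Filter.atTop (nhds 0) :=
      tendsto_pow_atTop_nhds_zero_of_lt_one (norm_nonneg z) hz1
    exact h1.comp (tendsto_pow_atTop_atTop_of_one_lt (r := (2:ℕ)) one_lt_two)
  have hne : ∀ n : ℕ, z ^ (2 ^ n) ≠ 0 := fun n => pow_ne_zero _ hz0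
  -- analytic at 0
  have hA : AnalyticAt ℂ F 0 := hF 0 (by simpa [mem_ball] using hr0)
  rcases hA.eventually_eq_zero_or_eventually_ne_zero with h | h
  · -- F ≡ 0 near 0 contradicts deriv F 0 = -a
    have hEq : F =ᶠ[nhds (0:ℂ)] fun _ => (0 : ℂ) := h
    have : deriv F 0 = 0 := by
      rw [hEq.deriv_eq]
      simp
    rw [h0'] at this
    exact ha (neg_eq_zero.mp this)
  · -- F ≠ 0 in punctured neighborhood contradicts zeros accumulating
    have htend' : Filter.Tendsto (fun n : ℕ => z ^ (2 ^ n)) Filter.atTop (nhdsWithin 0 {(0:ℂ)}ᶜ) := by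
      refine tendsto_nhdsWithin_of_tendsto_nhds_of_eventually_within _ htend ?_
      exact Filter.Eventually.of_forall fun n => hne n
    have := (htend'.eventually h).exists
    obtain ⟨n, hn⟩ := this
    exact hn (hzero n)
end

section
/- Suppose F is analytic on the disk {|z| < r}, r ≤ 1, F(0) = 0, F′(0) = −a ≠ 0, and F satisfies a(F(z)−1)F(z²) = F(z)². Then F′(z) ≠ 0 for all z ≠ 0 in the disk. -/
open Complex Metric

/-- If `F` is analytic on `{|z| < r}` with `r ≤ 1`, `F(0) = 0`, `F′(0) = −a ≠ 0`, and
`a(F(z)−1)F(z²) = F(z)²` on the disk, then `F′(z) ≠ 0` for all `z ≠ 0` in the disk. -/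
theorem stmt14 (a : ℂ) (ha : a ≠ 0) (r : ℝ) (hr0 : 0 < r) (hr1 : r ≤ 1) (F : ℂ → ℂ)
    (hF : AnalyticOnNhd ℂ F (ball (0 : ℂ) r))
    (h0 : F 0 = 0) (h0' : deriv F 0 = -a)
    (heq : ∀ z ∈ ball (0 : ℂ) r, z ^ 2 ∈ ball (0 : ℂ) r →
      a * (F z - 1) * F (z ^ 2) = F z ^ 2) :
    ∀ z ∈ ball (0 : ℂ) r, z ≠ 0 → deriv F z ≠ 0 := by
  -- z ∈ ball → z^2 ∈ ball
  have hsqmem : ∀ z : ℂ, z ∈ ball (0 : ℂ) r → z ^ 2 ∈ ball (0 : ℂ) r := by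
    intro z hz
    simp only [mem_ball, dist_zero_right] at hz ⊢
    have h1 : ‖z‖ < 1 := lt_of_lt_of_le hz hr1
    have h2 : (0:ℝ) ≤ ‖z‖ := norm_nonneg z
    rw [norm_pow]
    nlinarith
  -- propagation of zeros of F'
  have key : ∀ z ∈ ball (0 : ℂ) r, z ≠ 0 → deriv F z = 0 → deriv F (z ^ 2) = 0 := by
    intro z hz hz0 hd
    have hz2 := hsqmem z hz
    have hF1 : HasDerivAt F (deriv F z) z := (hF z hz).differentiableAt.hasDerivAt
    have hF2 : HasDerivAt F (deriv F (z ^ 2)) (z ^ 2) :=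
      (hF _ hz2).differentiableAt.hasDerivAt
    have hsq : HasDerivAt (fun w : ℂ => w ^ 2) (2 * z) z := by
      simpa using hasDerivAt_pow 2 z
    have h3 : HasDerivAt (fun w : ℂ => F (w ^ 2)) (deriv F (z ^ 2) * (2 * z)) z :=
      hF2.comp z hsq
    have hg : HasDerivAt (fun w : ℂ => a * (F w - 1) * F (w ^ 2))
        (a * deriv F z * F (z ^ 2) + a * (F z - 1) * (deriv F (z ^ 2) * (2 * z))) z := by
      have h : HasDerivAt (fun w : ℂ => a * (F w - 1) * F (w ^ 2)) _ z :=
        ((hF1.sub_const 1).const_mul a).mul h3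
      simpa [mul_comm, mul_assoc, mul_left_comm] using h
    have hh : HasDerivAt (fun w : ℂ => F w ^ 2) (2 * F z * deriv F z) z := by
      have h : HasDerivAt (fun w : ℂ => F w ^ 2) _ z := hF1.pow 2
      simpa [mul_comm, mul_assoc, mul_left_comm] using h
    have hev : (fun w : ℂ => a * (F w - 1) * F (w ^ 2)) =ᶠ[nhds z] (fun w : ℂ => F w ^ 2) := by
      filter_upwards [isOpen_ball.mem_nhds hz] with w hw
      exact heq w hw (hsqmem w hw)
    have hg' : HasDerivAt (fun w : ℂ => a * (F w - 1) * F (w ^ 2)) (2 * F z * deriv F z) z :=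
      hh.congr_of_eventuallyEq hev
    have huniq := hg.unique hg'
    rw [hd] at huniq
    -- F z ≠ 1
    have hFz1 : F z - 1 ≠ 0 := by
      intro h
      have h1 : F z = 1 := by linear_combination h
      have h2 := heq z hz hz2
      rw [h1] at h2
      simp at h2
    have h4 : a * (F z - 1) * (2 * z) * deriv F (z ^ 2) = 0 := by
      linear_combination huniq
    have hne : a * (F z - 1) * (2 * z) ≠ 0 :=
      mul_ne_zero (mul_ne_zero ha hFz1) (mul_ne_zero two_ne_zero hz0)
    exact (mul_eq_zero.1 h4).resolve_left hne
  intro z hz hz0 hd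
  -- the iterated sequence
  set w : ℕ → ℂ := fun n => z ^ (2 ^ n) with hw
  have hwsucc : ∀ n, w (n + 1) = (w n) ^ 2 := by
    intro n; simp only [hw]; rw [pow_succ, pow_mul]
  have hinv : ∀ n, w n ∈ ball (0 : ℂ) r ∧ w n ≠ 0 ∧ deriv F (w n) = 0 := by
    intro n
    induction n with
    | zero => exact ⟨by simpa [hw] using hz, by simpa [hw] using hz0, by simpa [hw] using hd⟩
    | succ k ih =>
      obtain ⟨h1, h2, h3⟩ := ih
      refine ⟨?_, ?_, ?_⟩
      · rw [hwsucc]; exact hsqmem _ h1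
      · rw [hwsucc]; exact pow_ne_zero 2 h2
      · rw [hwsucc]; exact key _ h1 h2 h3
  -- w n → 0
  have hz1 : ‖z‖ < 1 := by
    have : ‖z‖ < r := by simpa [mem_ball, dist_zero_right] using hz
    exact this.trans_le hr1
  have hnorm : ∀ n, ‖w n‖ ≤ ‖z‖ ^ (n + 1) := by
    intro n
    induction n with
    | zero => simp [hw]
    | succ k ih =>
      rw [hwsucc, norm_pow]
      calc ‖w k‖ ^ 2 ≤ (‖z‖ ^ (k + 1)) ^ 2 := by
            exact pow_le_pow_left₀ (norm_nonneg _) ih 2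
        _ = ‖z‖ ^ (2 * (k + 1)) := by rw [← pow_mul]; ring_nf
        _ ≤ ‖z‖ ^ (k + 2) := pow_le_pow_of_le_one (norm_nonneg _) hz1.le (by omega)
  have htend : Filter.Tendsto w Filter.atTop (nhds 0) := by
    rw [tendsto_zero_iff_norm_tendsto_zero]
    refine squeeze_zero (fun n => norm_nonneg _) hnorm ?_
    have : Filter.Tendsto (fun n : ℕ => ‖z‖ ^ n) Filter.atTop (nhds 0) :=
      tendsto_pow_atTop_nhds_zero_of_lt_one (norm_nonneg z) hz1
    exact this.comp (Filter.tendsto_add_atTop_nat 1)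
  -- deriv F continuous at 0
  have hcont : ContinuousAt (deriv F) 0 :=
    (hF.deriv 0 (by simpa [mem_ball] using hr0)).continuousAt
  have htend2 : Filter.Tendsto (fun n => deriv F (w n)) Filter.atTop (nhds (deriv F 0)) :=
    hcont.tendsto.comp htend
  have : Filter.Tendsto (fun _ : ℕ => (0 : ℂ)) Filter.atTop (nhds (deriv F 0)) := by
    refine htend2.congr fun n => ?_
    exact (hinv n).2.2
  have h00 : deriv F 0 = 0 := tendsto_nhds_unique this tendsto_const_nhds
  rw [h0'] at h00
  exact ha (by linear_combination -h00)
end
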